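/- Suppose real symmetric-sized matrices P_{jj} ∈ ℝ^{n_j×n_j} (j = 1, …, k) satisfy the coupled Lyapunov equations A₁ P₁₁ + P₁₁ A₁ᵀ + B₁ B₁ᵀ = 0 and, for j = 2, …, k, A_j P_{jj} + P_{jj} A_jᵀ + N_{j−1} P_{(j−1)(j−1)} N_{j−1}ᵀ = 0. Then the block-diagonal matrix P = blockdiag(P₁₁, …, P_{kk}) satisfies the generalized Lyapunov (controllability Gramian) equation of the aggregated bilinear system: A P + P Aᵀ + N P Nᵀ + B Bᵀ = 0, where A, N, B are the aggregated K-power system matrices. -/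
import Mathlib


open Matrix

/-- The aggregated block-diagonal matrix `blockdiag(M₀, …, M_{k-1})` (indices are 0-based:
block `j` has dimension `n j`). -/
def aggBlockDiag {α : Type*} [Zero α] (k : ℕ) (n : ℕ → ℕ)
    (M : (j : ℕ) → Matrix (Fin (n j)) (Fin (n j)) α) :
    Matrix ((j : Fin k) × Fin (n j)) ((j : Fin k) × Fin (n j)) α :=
  fun p q =>
    if h : (p.1 : ℕ) = (q.1 : ℕ) then M (p.1 : ℕ) p.2 (Fin.cast (congrArg n h.symm) q.2) else 0

/-- The aggregated block-subdiagonal matrix `N` whose only nonzero blocks are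
`N j` placed in block position `(j+1, j)`. -/
def aggSubDiag {α : Type*} [Zero α] (k : ℕ) (n : ℕ → ℕ)
    (N : (j : ℕ) → Matrix (Fin (n (j + 1))) (Fin (n j)) α) :
    Matrix ((j : Fin k) × Fin (n j)) ((j : Fin k) × Fin (n j)) α :=
  fun p q =>
    if h : (p.1 : ℕ) = (q.1 : ℕ) + 1 then N (q.1 : ℕ) (Fin.cast (congrArg n h) p.2) q.2 else 0

/-- The aggregated input vector `B` whose first block is `B₁` and all other blocks are zero. -/
def aggB {α : Type*} [Zero α] (k : ℕ) (n : ℕ → ℕ) (B1 : Fin (n 0) → α) :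
    ((j : Fin k) × Fin (n j)) → α :=
  fun p => if h : (p.1 : ℕ) = 0 then B1 (Fin.cast (congrArg n h) p.2) else 0

section Aux

variable {k : ℕ} {n : ℕ → ℕ}

/-- Summing over the sigma type when only the fiber over `a` contributes. -/
lemma sum_sigma_single {α : Type*} [AddCommMonoid α]
    (f : ((j : Fin k) × Fin (n j)) → α) (a : Fin k)
    (h : ∀ (j : Fin k) (i : Fin (n j)), j ≠ a → f ⟨j, i⟩ = 0) :
    ∑ r : (j : Fin k) × Fin (n j), f r = ∑ i : Fin (n a), f ⟨a, i⟩ := by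
  rw [← Finset.univ_sigma_univ, Finset.sum_sigma]
  exact Finset.sum_eq_single a
    (fun j _ hj => Finset.sum_eq_zero fun i _ => h j i hj)
    (fun ha => absurd (Finset.mem_univ a) ha)

/-- `aggBlockDiag` is a `blockDiagonal'`. -/
lemma aggBlockDiag_eq {α : Type*} [Zero α]
    (M : (j : ℕ) → Matrix (Fin (n j)) (Fin (n j)) α) :
    aggBlockDiag k n M = blockDiagonal' (fun j : Fin k => M (j : ℕ)) := by
  funext p q
  obtain ⟨a, x⟩ := p
  obtain ⟨b, y⟩ := q
  rw [blockDiagonal'_apply']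
  by_cases h : a = b
  · subst h
    rw [dif_pos rfl]
    exact dif_pos rfl
  · have h' : (a : ℕ) ≠ (b : ℕ) := fun hh => h (Fin.ext hh)
    rw [dif_neg h]
    exact dif_neg h'

/-- The product of the sub-diagonal aggregate with a block-diagonal aggregate. -/
lemma aggSubDiag_mul_aggBlockDiag
    (N : (j : ℕ) → Matrix (Fin (n (j + 1))) (Fin (n j)) ℝ)
    (P : (j : ℕ) → Matrix (Fin (n j)) (Fin (n j)) ℝ) :
    aggSubDiag k n N * aggBlockDiag k n P = aggSubDiag k n (fun j => N j * P j) := by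
  funext p q
  obtain ⟨a, x⟩ := p
  obtain ⟨b, y⟩ := q
  rw [Matrix.mul_apply]
  rw [sum_sigma_single _ b (fun j i hj => by
    have h' : (j : ℕ) ≠ (b : ℕ) := fun hh => hj (Fin.ext hh)
    have hz : aggBlockDiag k n P ⟨j, i⟩ ⟨b, y⟩ = 0 := dif_neg h'
    rw [hz, mul_zero])]
  by_cases h : (a : ℕ) = (b : ℕ) + 1
  · have hR : aggSubDiag k n (fun j => N j * P j) ⟨a, x⟩ ⟨b, y⟩ =
        (N (b : ℕ) * P (b : ℕ)) (Fin.cast (congrArg n h) x) y := dif_pos h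
    rw [hR, Matrix.mul_apply]
    refine Finset.sum_congr rfl fun i _ => ?_
    have e1 : aggSubDiag k n N ⟨a, x⟩ ⟨b, i⟩ =
        N (b : ℕ) (Fin.cast (congrArg n h) x) i := dif_pos h
    have e2 : aggBlockDiag k n P ⟨b, i⟩ ⟨b, y⟩ = P (b : ℕ) i y := dif_pos rfl
    rw [e1, e2]
  · have hR : aggSubDiag k n (fun j => N j * P j) ⟨a, x⟩ ⟨b, y⟩ = 0 := dif_neg h
    rw [hR]
    refine Finset.sum_eq_zero fun i _ => ?_
    have e1 : aggSubDiag k n N ⟨a, x⟩ ⟨b, i⟩ = 0 := dif_neg h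
    rw [e1, zero_mul]

/-- The block-diagonal family arising from `M * Nᵀ` for sub-diagonal aggregates. -/
def subQ (n : ℕ → ℕ) (M N : (j : ℕ) → Matrix (Fin (n (j + 1))) (Fin (n j)) ℝ) :
    (j : ℕ) → Matrix (Fin (n j)) (Fin (n j)) ℝ
  | 0 => 0
  | j + 1 => M j * (N j)ᵀ

lemma subQ_entry (M N : (j : ℕ) → Matrix (Fin (n (j + 1))) (Fin (n j)) ℝ)
    (c : ℕ) (hc : c < k) (x y : Fin (n c)) :
    (∑ r : (j : Fin k) × Fin (n j),
        (if h : c = (r.1 : ℕ) + 1 then M (r.1 : ℕ) (Fin.cast (congrArg n h) x) r.2 else 0) *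
        (if h : c = (r.1 : ℕ) + 1 then N (r.1 : ℕ) (Fin.cast (congrArg n h) y) r.2 else 0)) =
      subQ n M N c x y := by
  cases c with
  | zero =>
    rw [show subQ n M N 0 = 0 from rfl]
    rw [Matrix.zero_apply]
    exact Finset.sum_eq_zero fun r _ => by
      rw [dif_neg (Nat.zero_ne_add_one _ : (0 : ℕ) ≠ (r.1 : ℕ) + 1), zero_mul]
  | succ j =>
    have hj : j < k := Nat.lt_of_succ_lt hc
    set b : Fin k := ⟨j, hj⟩ with hb
    have hsum := sum_sigma_single
      (fun r : (j : Fin k) × Fin (n j) =>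
        (if h : j + 1 = (r.1 : ℕ) + 1 then M (r.1 : ℕ) (Fin.cast (congrArg n h) x) r.2 else 0) *
        (if h : j + 1 = (r.1 : ℕ) + 1 then N (r.1 : ℕ) (Fin.cast (congrArg n h) y) r.2 else 0))
      b
      (fun r i hr => by
        have h' : j + 1 ≠ (r : ℕ) + 1 := by
          intro hh
          exact hr (Fin.ext (Nat.succ_injective hh).symm)
        dsimp only
        rw [dif_neg h', zero_mul])
    rw [hsum]
    rw [show subQ n M N (j + 1) = M j * (N j)ᵀ from rfl, Matrix.mul_apply]
    refine Finset.sum_congr rfl fun i _ => ?_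
    dsimp only
    have e1 : (if h : j + 1 = (b : ℕ) + 1 then M (b : ℕ) (Fin.cast (congrArg n h) x) i
        else 0) = M j x i := dif_pos rfl
    have e2 : (if h : j + 1 = (b : ℕ) + 1 then N (b : ℕ) (Fin.cast (congrArg n h) y) i
        else 0) = (N j)ᵀ i y := dif_pos rfl
    rw [e1, e2]

/-- `N P Nᵀ`-type products of sub-diagonal aggregates are block diagonal. -/
lemma aggSubDiag_mul_transpose
    (M N : (j : ℕ) → Matrix (Fin (n (j + 1))) (Fin (n j)) ℝ) :
    aggSubDiag k n M * (aggSubDiag k n N)ᵀ =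
      blockDiagonal' (fun j : Fin k => subQ n M N (j : ℕ)) := by
  funext p q
  obtain ⟨a, x⟩ := p
  obtain ⟨b, y⟩ := q
  rw [Matrix.mul_apply]
  by_cases h : a = b
  · subst h
    rw [blockDiagonal'_apply_eq]
    have := subQ_entry (k := k) M N (a : ℕ) a.isLt x y
    simpa only [aggSubDiag, transpose_apply] using this
  · rw [blockDiagonal'_apply_ne _ _ _ h]
    refine Finset.sum_eq_zero fun r _ => ?_
    simp only [aggSubDiag, transpose_apply]
    by_cases h1 : (a : ℕ) = (r.1 : ℕ) + 1
    · have h2 : (b : ℕ) ≠ (r.1 : ℕ) + 1 := by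
        intro hh
        exact h (Fin.ext (h1.trans hh.symm))
      rw [dif_neg h2, mul_zero]
    · rw [dif_neg h1, zero_mul]

/-- The block-diagonal family arising from `B Bᵀ`. -/
def subR (n : ℕ → ℕ) (B1 : Fin (n 0) → ℝ) :
    (j : ℕ) → Matrix (Fin (n j)) (Fin (n j)) ℝ
  | 0 => vecMulVec B1 B1
  | _ + 1 => 0

lemma subR_entry (B1 : Fin (n 0) → ℝ) (c : ℕ) (x y : Fin (n c)) :
    (if h : c = 0 then B1 (Fin.cast (congrArg n h) x) else 0) *
      (if h : c = 0 then B1 (Fin.cast (congrArg n h) y) else 0) = subR n B1 c x y := by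
  cases c with
  | zero =>
    rw [dif_pos rfl, dif_pos rfl]
    rfl
  | succ j =>
    rw [dif_neg (Nat.succ_ne_zero j), zero_mul]
    rfl

/-- `B Bᵀ` is block diagonal. -/
lemma aggB_vecMulVec (B1 : Fin (n 0) → ℝ) :
    vecMulVec (aggB k n B1) (aggB k n B1) =
      blockDiagonal' (fun j : Fin k => subR n B1 (j : ℕ)) := by
  funext p q
  obtain ⟨a, x⟩ := p
  obtain ⟨b, y⟩ := q
  rw [vecMulVec_apply]
  by_cases h : a = b
  · subst h
    rw [blockDiagonal'_apply_eq]
    have := subR_entry (n := n) B1 (a : ℕ) x y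
    simpa only [aggB] using this
  · rw [blockDiagonal'_apply_ne _ _ _ h]
    simp only [aggB]
    by_cases h1 : (a : ℕ) = 0
    · have h2 : (b : ℕ) ≠ 0 := by
        intro hh
        exact h (Fin.ext (h1.trans hh.symm))
      rw [dif_neg h2, mul_zero]
    · rw [dif_neg h1, zero_mul]

end Aux

/-- If the matrices `P j` solve the coupled subsystem Lyapunov equations
`A₀ P₀ + P₀ A₀ᵀ + B₁ B₁ᵀ = 0` and, for `j + 1 < k`,
`A_{j+1} P_{j+1} + P_{j+1} A_{j+1}ᵀ + N_j P_j N_jᵀ = 0`, then the block-diagonal matrix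
`P = blockdiag(P₀, …, P_{k-1})` solves the generalized Lyapunov (controllability Gramian)
equation `A P + P Aᵀ + N P Nᵀ + B Bᵀ = 0` of the aggregated K-power bilinear system. -/
theorem kpower_controllability_gramian_block_diagonal (k : ℕ) (hk : 1 ≤ k) (n : ℕ → ℕ)
    (A : (j : ℕ) → Matrix (Fin (n j)) (Fin (n j)) ℝ)
    (N : (j : ℕ) → Matrix (Fin (n (j + 1))) (Fin (n j)) ℝ)
    (B1 : Fin (n 0) → ℝ)
    (P : (j : ℕ) → Matrix (Fin (n j)) (Fin (n j)) ℝ)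
    (h0 : A 0 * P 0 + P 0 * (A 0)ᵀ + vecMulVec B1 B1 = 0)
    (hstep : ∀ j : ℕ, j + 1 < k →
      A (j + 1) * P (j + 1) + P (j + 1) * (A (j + 1))ᵀ + N j * P j * (N j)ᵀ = 0) :
    aggBlockDiag k n A * aggBlockDiag k n P +
        aggBlockDiag k n P * (aggBlockDiag k n A)ᵀ +
        aggSubDiag k n N * aggBlockDiag k n P * (aggSubDiag k n N)ᵀ +
        vecMulVec (aggB k n B1) (aggB k n B1) = 0 := by
  rw [aggSubDiag_mul_aggBlockDiag, aggSubDiag_mul_transpose, aggB_vecMulVec,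
    aggBlockDiag_eq A, aggBlockDiag_eq P, blockDiagonal'_transpose,
    ← blockDiagonal'_mul, ← blockDiagonal'_mul, ← blockDiagonal'_add,
    ← blockDiagonal'_add, ← blockDiagonal'_add]
  rw [show (0 : Matrix ((j : Fin k) × Fin (n j)) ((j : Fin k) × Fin (n j)) ℝ) =
      blockDiagonal' (0 : (j : Fin k) → Matrix (Fin (n j)) (Fin (n j)) ℝ) from
    (blockDiagonal'_zero).symm]
  rw [blockDiagonal'_inj]
  funext j
  have hj : (j : ℕ) < k := j.isLt
  show A (j : ℕ) * P (j : ℕ) + P (j : ℕ) * (A (j : ℕ))ᵀ +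
      subQ n (fun i => N i * P i) N (j : ℕ) + subR n B1 (j : ℕ) = 0
  rcases hc : (j : ℕ) with _ | c
  · show A 0 * P 0 + P 0 * (A 0)ᵀ + 0 + vecMulVec B1 B1 = 0
    rw [add_zero]
    exact h0
  · have hck : c + 1 < k := hc ▸ hj
    show A (c + 1) * P (c + 1) + P (c + 1) * (A (c + 1))ᵀ +
        N c * P c * (N c)ᵀ + 0 = 0
    rw [add_zero]
    exact hstep c hck
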